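/- Let (C^{0̄}, C^{1̄}, d_{0̄}, d_{1̄}) be a Z₂-graded finite dimensional complex with non-degenerate symmetric bilinear forms b, and suppose the Laplacians Δ_{b,0̄} and Δ_{b,1̄} are invertible (i.e. their generalized 0-eigenspaces vanish). Then for each k, C^{k̄} = im(d_{\overline{k+1}}) ⊕ im(d^#_{k̄}), and this decomposition is b-orthogonal and invariant under Δ_{b,k̄}. -/
import Mathlib


open Module

/-- if the Laplacians of a Z₂-graded finite dimensional complex with
non-degenerate symmetric bilinear forms are invertible (trivial generalized `0`-eigenspaces),
then `C^{k̄} = im d_{k+1̄} ⊕ im d^#_{k̄}`, the decomposition being `b`-orthogonal and invariant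
under the Laplacian. -/
theorem image_decomposition_of_invertible_laplacian
    (C0 C1 : Type) [AddCommGroup C0] [Module ℂ C0] [AddCommGroup C1] [Module ℂ C1]
    [FiniteDimensional ℂ C0] [FiniteDimensional ℂ C1]
    (b0 : C0 →ₗ[ℂ] C0 →ₗ[ℂ] ℂ) (b1 : C1 →ₗ[ℂ] C1 →ₗ[ℂ] ℂ)
    (hb0symm : ∀ x y, b0 x y = b0 y x) (hb1symm : ∀ x y, b1 x y = b1 y x)
    (hb0nd : ∀ x, (∀ y, b0 x y = 0) → x = 0) (hb1nd : ∀ x, (∀ y, b1 x y = 0) → x = 0)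
    (d0 : C0 →ₗ[ℂ] C1) (d1 : C1 →ₗ[ℂ] C0)
    (hd10 : d1 ∘ₗ d0 = 0) (hd01 : d0 ∘ₗ d1 = 0)
    (d0s : C1 →ₗ[ℂ] C0) (d1s : C0 →ₗ[ℂ] C1)
    (hadj0 : ∀ x y, b1 (d0 x) y = b0 x (d0s y))
    (hadj1 : ∀ x y, b0 (d1 x) y = b1 x (d1s y))
    (Δ0 : Module.End ℂ C0) (hΔ0 : Δ0 = d0s ∘ₗ d0 + d1 ∘ₗ d1s)
    (Δ1 : Module.End ℂ C1) (hΔ1 : Δ1 = d1s ∘ₗ d1 + d0 ∘ₗ d0s)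
    (h0 : Δ0.maxGenEigenspace 0 = ⊥) (h1 : Δ1.maxGenEigenspace 0 = ⊥) :
    -- degree 0̄ : C^{0̄} = im d_{1̄} ⊕ im d^#_{0̄}
    (LinearMap.range d1 ⊔ LinearMap.range d0s = ⊤) ∧
    (LinearMap.range d1 ⊓ LinearMap.range d0s = ⊥) ∧
    (∀ u ∈ LinearMap.range d1, ∀ v ∈ LinearMap.range d0s, b0 u v = 0) ∧
    (Submodule.map Δ0 (LinearMap.range d1) ≤ LinearMap.range d1) ∧
    (Submodule.map Δ0 (LinearMap.range d0s) ≤ LinearMap.range d0s) ∧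
    -- degree 1̄ : C^{1̄} = im d_{0̄} ⊕ im d^#_{1̄}
    (LinearMap.range d0 ⊔ LinearMap.range d1s = ⊤) ∧
    (LinearMap.range d0 ⊓ LinearMap.range d1s = ⊥) ∧
    (∀ u ∈ LinearMap.range d0, ∀ v ∈ LinearMap.range d1s, b1 u v = 0) ∧
    (Submodule.map Δ1 (LinearMap.range d0) ≤ LinearMap.range d0) ∧
    (Submodule.map Δ1 (LinearMap.range d1s) ≤ LinearMap.range d1s) := by
  -- composition identities for adjoints
  have hd10' : ∀ x, d1 (d0 x) = 0 := fun x => congrFun (congrArg DFunLike.coe hd10) x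
  have hd01' : ∀ x, d0 (d1 x) = 0 := fun x => congrFun (congrArg DFunLike.coe hd01) x
  have hs10 : ∀ y, d1s (d0s y) = 0 := by
    intro y
    apply hb1nd
    intro x
    rw [hb1symm, ← hadj1, ← hadj0, hd01', map_zero, LinearMap.zero_apply]
  have hs01 : ∀ y, d0s (d1s y) = 0 := by
    intro y
    apply hb0nd
    intro x
    rw [hb0symm, ← hadj0, ← hadj1, hd10', map_zero, LinearMap.zero_apply]
  -- injectivity & surjectivity of Laplacians
  have hker0 : LinearMap.ker Δ0 = ⊥ := by
    rw [eq_bot_iff, ← h0]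
    intro x hx
    rw [Module.End.mem_maxGenEigenspace]
    exact ⟨1, by simpa using hx⟩
  have hker1 : LinearMap.ker Δ1 = ⊥ := by
    rw [eq_bot_iff, ← h1]
    intro x hx
    rw [Module.End.mem_maxGenEigenspace]
    exact ⟨1, by simpa using hx⟩
  have hsurj0 : Function.Surjective Δ0 :=
    (LinearMap.injective_iff_surjective).mp (LinearMap.ker_eq_bot.mp hker0)
  have hsurj1 : Function.Surjective Δ1 :=
    (LinearMap.injective_iff_surjective).mp (LinearMap.ker_eq_bot.mp hker1)
  -- orthogonality
  have horth0 : ∀ u ∈ LinearMap.range d1, ∀ v ∈ LinearMap.range d0s, b0 u v = 0 := by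
    rintro _ ⟨x, rfl⟩ _ ⟨y, rfl⟩
    rw [← hadj0, hd01', map_zero, LinearMap.zero_apply]
  have horth1 : ∀ u ∈ LinearMap.range d0, ∀ v ∈ LinearMap.range d1s, b1 u v = 0 := by
    rintro _ ⟨x, rfl⟩ _ ⟨y, rfl⟩
    rw [← hadj1, hd10', map_zero, LinearMap.zero_apply]
  -- sup = ⊤
  have hsup0 : LinearMap.range d1 ⊔ LinearMap.range d0s = ⊤ := by
    rw [eq_top_iff]
    rintro x -
    obtain ⟨y, rfl⟩ := hsurj0 x
    rw [hΔ0]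
    exact Submodule.add_mem _
      (Submodule.mem_sup_right ⟨d0 y, rfl⟩) (Submodule.mem_sup_left ⟨d1s y, rfl⟩)
  have hsup1 : LinearMap.range d0 ⊔ LinearMap.range d1s = ⊤ := by
    rw [eq_top_iff]
    rintro x -
    obtain ⟨y, rfl⟩ := hsurj1 x
    rw [hΔ1]
    exact Submodule.add_mem _
      (Submodule.mem_sup_right ⟨d1 y, rfl⟩) (Submodule.mem_sup_left ⟨d0s y, rfl⟩)
  -- inf = ⊥
  have hinf0 : LinearMap.range d1 ⊓ LinearMap.range d0s = ⊥ := by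
    rw [eq_bot_iff]
    rintro w ⟨hw1, hw2⟩
    have : ∀ y, b0 w y = 0 := by
      intro y
      have hy : y ∈ LinearMap.range d1 ⊔ LinearMap.range d0s := hsup0 ▸ Submodule.mem_top
      obtain ⟨a, ha, c, hc, rfl⟩ := Submodule.mem_sup.mp hy
      rw [map_add]
      rw [hb0symm w a, horth0 a ha w hw2, horth0 w hw1 c hc, add_zero]
    simpa using hb0nd w this
  have hinf1 : LinearMap.range d0 ⊓ LinearMap.range d1s = ⊥ := by
    rw [eq_bot_iff]
    rintro w ⟨hw1, hw2⟩
    have : ∀ y, b1 w y = 0 := by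
      intro y
      have hy : y ∈ LinearMap.range d0 ⊔ LinearMap.range d1s := hsup1 ▸ Submodule.mem_top
      obtain ⟨a, ha, c, hc, rfl⟩ := Submodule.mem_sup.mp hy
      rw [map_add]
      rw [hb1symm w a, horth1 a ha w hw2, horth1 w hw1 c hc, add_zero]
    simpa using hb1nd w this
  -- invariance
  refine ⟨hsup0, hinf0, horth0, ?_, ?_, hsup1, hinf1, horth1, ?_, ?_⟩
  · rintro _ ⟨_, ⟨x, rfl⟩, rfl⟩
    refine ⟨d1s (d1 x), ?_⟩
    rw [hΔ0]; simp [hd01' x]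
  · rintro _ ⟨_, ⟨y, rfl⟩, rfl⟩
    refine ⟨d0 (d0s y), ?_⟩
    rw [hΔ0]; simp [hs10 y]
  · rintro _ ⟨_, ⟨x, rfl⟩, rfl⟩
    refine ⟨d0s (d0 x), ?_⟩
    rw [hΔ1]; simp [hd10' x]
  · rintro _ ⟨_, ⟨y, rfl⟩, rfl⟩
    refine ⟨d1 (d1s y), ?_⟩
    rw [hΔ1]; simp [hs01 y]
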